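/- Let n ≥ 1, let σ be an n×n complex matrix, ε ∈ ℂ, let α, β̃ ∈ ℂⁿ, and let Ψ₀, Ψ₁, Ψ̃₀, Ψ̃₁, h₀, h₁, h₂ be n×n complex matrices. Assume Ψ₀·α = 0 and ε·(αᵀσα) = 0. Define L₀ := α·β̃ᵀ·σ·h₀·Ψ₁ + α·β̃ᵀ·σ·h₁·Ψ₀ + ε·α·β̃ᵀ·σ·h₂·β̃·αᵀ·σ + Ψ̃₀·h₀·Ψ₀ + ε·Ψ̃₀·h₁·β̃·αᵀ·σ + ε·Ψ̃₁·h₀·β̃·αᵀ·σ. Then L₀·α = (β̃ᵀ·σ·h₀·Ψ₁·α)·α, i.e. α is an eigenvector of L₀ with eigenvalue κ = β̃ᵀσh₀Ψ₁α. -/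
import Mathlib

open Matrix

lemma vecMulVec_mulVec' {n : ℕ} (a b x : Fin n → ℂ) :
    (vecMulVec a b).mulVec x = (b ⬝ᵥ x) • a := by
  ext i
  simp only [mulVec, vecMulVec_apply, dotProduct, Pi.smul_apply, smul_eq_mul,
    Finset.sum_mul]
  exact Finset.sum_congr rfl fun j _ => by ring

/-- `α` is an eigenvector of the `z⁰` coefficient `L₀` of `Ψ⁻¹hΨ`, with eigenvalue
`κ = β̃ᵀσh₀Ψ₁α`. -/
theorem eigenvector_of_L0 (n : ℕ) (hn : 1 ≤ n)
    (σ : Matrix (Fin n) (Fin n) ℂ) (ε : ℂ) (α βt : Fin n → ℂ)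
    (Ψ₀ Ψ₁ Ψt₀ Ψt₁ h₀ h₁ h₂ : Matrix (Fin n) (Fin n) ℂ)
    (hΨ₀α : Ψ₀.mulVec α = 0)
    (hεα : ε * (α ⬝ᵥ σ.mulVec α) = 0) :
    (vecMulVec α βt * σ * h₀ * Ψ₁
      + vecMulVec α βt * σ * h₁ * Ψ₀
      + ε • (vecMulVec α βt * σ * h₂ * vecMulVec βt α * σ)
      + Ψt₀ * h₀ * Ψ₀
      + ε • (Ψt₀ * h₁ * vecMulVec βt α * σ)
      + ε • (Ψt₁ * h₀ * vecMulVec βt α * σ)).mulVec α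
    = (βt ⬝ᵥ (σ * h₀ * Ψ₁).mulVec α) • α := by
  simp only [Matrix.add_mulVec, Matrix.smul_mulVec, ← Matrix.mulVec_mulVec,
    hΨ₀α, vecMulVec_mulVec', Matrix.mulVec_zero, Matrix.mulVec_smul, add_zero, zero_add,
    smul_smul]
  rcases mul_eq_zero.mp hεα with h | h <;>
    simp [h, vecMulVec_mulVec', smul_smul, mul_comm, mul_left_comm]
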